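/- Define fA (x₁, x₂) = (−x₁/8 − x₂, 2x₁ − x₂/8) and fB (x₁, x₂) = (−x₁/8 − 2x₂, x₁ − x₂/8) on ℝ × ℝ. The origin is NOT stable under arbitrary switching between fA and fB: there exists ε > 0 such that for every δ > 0 there exist ω with ‖ω‖ < δ and a state ν reachable from ω in the reflexive-transitive closure of the union of the fA-flow relation and the fB-flow relation (with trivial domains) satisfying ‖ν‖ ≥ ε. -/

import Mathlib

/-- The vector field `fA (x₁, x₂) = (−x₁/8 − x₂, 2x₁ − x₂/8)`. -/
noncomputable def fA (x : ℝ × ℝ) : ℝ × ℝ := (-x.1 / 8 - x.2, 2 * x.1 - x.2 / 8)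

/-- The vector field `fB (x₁, x₂) = (−x₁/8 − 2x₂, x₁ − x₂/8)`. -/
noncomputable def fB (x : ℝ × ℝ) : ℝ × ℝ := (-x.1 / 8 - 2 * x.2, x.1 - x.2 / 8)

/-- The flow relation for a vector field `g` on `ℝ × ℝ` (trivial domain). -/
def FlowRel (g : ℝ × ℝ → ℝ × ℝ) (ω ν : ℝ × ℝ) : Prop :=
  ∃ t : ℝ, 0 ≤ t ∧ ∃ φ : ℝ → ℝ × ℝ, φ 0 = ω ∧ φ t = ν ∧
    ∀ s ∈ Set.Icc (0 : ℝ) t, HasDerivWithinAt φ (g (φ s)) (Set.Icc (0 : ℝ) t) s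

/-- The Euclidean norm on `ℝ × ℝ`. -/
noncomputable def enorm2 (x : ℝ × ℝ) : ℝ := Real.sqrt (x.1 ^ 2 + x.2 ^ 2)

section Aux

open Real

noncomputable def tQ : ℝ := π / (2 * Real.sqrt 2)

noncomputable def kQ : ℝ := Real.exp (-(tQ / 8))

noncomputable def LQ : ℝ := Real.sqrt 2 * kQ

lemma sqrt2_pos : (0 : ℝ) < Real.sqrt 2 := Real.sqrt_pos.2 (by norm_num)

lemma tQ_pos : 0 < tQ := div_pos Real.pi_pos (by positivity)

lemma sqrt2_mul_tQ : Real.sqrt 2 * tQ = π / 2 := by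
  have h := sqrt2_pos
  field_simp [tQ]
  unfold tQ
  field_simp

lemma hE (s : ℝ) : HasDerivAt (fun s : ℝ => Real.exp (-(s / 8)))
    (-(1/8) * Real.exp (-(s / 8))) s := by
  have h : HasDerivAt (fun s : ℝ => -(s/8)) (-(1/8)) s := ((hasDerivAt_id s).div_const 8).neg
  simpa [mul_comm, Function.comp_def] using (Real.hasDerivAt_exp (-(s/8))).comp s h

lemma hMul : ∀ s : ℝ, HasDerivAt (fun s : ℝ => Real.sqrt 2 * s) (Real.sqrt 2) s := fun s => by
  simpa using (hasDerivAt_id s).const_mul (Real.sqrt 2)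

lemma hC (s : ℝ) : HasDerivAt (fun s : ℝ => Real.cos (Real.sqrt 2 * s))
    (-Real.sqrt 2 * Real.sin (Real.sqrt 2 * s)) s := by
  have : HasDerivAt (fun s : ℝ => Real.cos (Real.sqrt 2 * s)) _ s := (Real.hasDerivAt_cos (Real.sqrt 2 * s)).comp s (hMul s)
  convert this using 1
  ring

lemma hS (s : ℝ) : HasDerivAt (fun s : ℝ => Real.sin (Real.sqrt 2 * s))
    (Real.sqrt 2 * Real.cos (Real.sqrt 2 * s)) s := by
  have : HasDerivAt (fun s : ℝ => Real.sin (Real.sqrt 2 * s)) _ s := (Real.hasDerivAt_sin (Real.sqrt 2 * s)).comp s (hMul s)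
  convert this using 1
  ring

/-- Flow of fA from (c,0): quarter turn to (0, √2·k·c). -/
lemma flowA (c : ℝ) : FlowRel fA (c, 0) (0, LQ * c) := by
  refine ⟨tQ, tQ_pos.le,
    fun s => (c * (Real.exp (-(s / 8)) * Real.cos (Real.sqrt 2 * s)),
      c * Real.sqrt 2 * (Real.exp (-(s / 8)) * Real.sin (Real.sqrt 2 * s))), ?_, ?_, ?_⟩
  · simp
  · simp only [sqrt2_mul_tQ, Real.cos_pi_div_two, Real.sin_pi_div_two, LQ, kQ, Prod.mk.injEq]
    constructor <;> ring
  · intro s _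
    have h1 : HasDerivAt (fun s : ℝ => c * (Real.exp (-(s / 8)) * Real.cos (Real.sqrt 2 * s)))
        (c * ((-(1/8) * Real.exp (-(s/8))) * Real.cos (Real.sqrt 2 * s)
          + Real.exp (-(s/8)) * (-Real.sqrt 2 * Real.sin (Real.sqrt 2 * s)))) s :=
      ((hE s).mul (hC s)).const_mul c
    have h2 : HasDerivAt (fun s : ℝ => c * Real.sqrt 2 * (Real.exp (-(s / 8)) * Real.sin (Real.sqrt 2 * s)))
        (c * Real.sqrt 2 * ((-(1/8) * Real.exp (-(s/8))) * Real.sin (Real.sqrt 2 * s)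
          + Real.exp (-(s/8)) * (Real.sqrt 2 * Real.cos (Real.sqrt 2 * s)))) s :=
      ((hE s).mul (hS s)).const_mul (c * Real.sqrt 2)
    have : HasDerivWithinAt (fun s : ℝ => (c * (Real.exp (-(s / 8)) * Real.cos (Real.sqrt 2 * s)), c * Real.sqrt 2 * (Real.exp (-(s / 8)) * Real.sin (Real.sqrt 2 * s)))) _ (Set.Icc (0:ℝ) tQ) s := (h1.prodMk h2).hasDerivWithinAt (s := Set.Icc (0:ℝ) tQ)
    have hs2 : Real.sqrt 2 * Real.sqrt 2 = 2 := Real.mul_self_sqrt (by norm_num)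
    convert this using 2
    · simp only [fA]
      ring
    · simp only [fA]
      linear_combination (-(c * Real.exp (-(s/8)) * Real.cos (Real.sqrt 2 * s))) * hs2

/-- Flow of fB from (0,d): quarter turn to (−√2·k·d, 0). -/
lemma flowB (d : ℝ) : FlowRel fB (0, d) (-(LQ * d), 0) := by
  refine ⟨tQ, tQ_pos.le,
    fun s => (-(d * Real.sqrt 2) * (Real.exp (-(s / 8)) * Real.sin (Real.sqrt 2 * s)),
      d * (Real.exp (-(s / 8)) * Real.cos (Real.sqrt 2 * s))), ?_, ?_, ?_⟩
  · simp
  · simp only [sqrt2_mul_tQ, Real.cos_pi_div_two, Real.sin_pi_div_two, LQ, kQ, Prod.mk.injEq]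
    constructor <;> ring
  · intro s _
    have h1 : HasDerivAt (fun s : ℝ => -(d * Real.sqrt 2) * (Real.exp (-(s / 8)) * Real.sin (Real.sqrt 2 * s)))
        (-(d * Real.sqrt 2) * ((-(1/8) * Real.exp (-(s/8))) * Real.sin (Real.sqrt 2 * s)
          + Real.exp (-(s/8)) * (Real.sqrt 2 * Real.cos (Real.sqrt 2 * s)))) s :=
      ((hE s).mul (hS s)).const_mul _
    have h2 : HasDerivAt (fun s : ℝ => d * (Real.exp (-(s / 8)) * Real.cos (Real.sqrt 2 * s)))
        (d * ((-(1/8) * Real.exp (-(s/8))) * Real.cos (Real.sqrt 2 * s)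
          + Real.exp (-(s/8)) * (-Real.sqrt 2 * Real.sin (Real.sqrt 2 * s)))) s :=
      ((hE s).mul (hC s)).const_mul d
    have : HasDerivWithinAt (fun s : ℝ => (-(d * Real.sqrt 2) * (Real.exp (-(s / 8)) * Real.sin (Real.sqrt 2 * s)), d * (Real.exp (-(s / 8)) * Real.cos (Real.sqrt 2 * s)))) _ (Set.Icc (0:ℝ) tQ) s := (h1.prodMk h2).hasDerivWithinAt (s := Set.Icc (0:ℝ) tQ)
    have hs2 : Real.sqrt 2 * Real.sqrt 2 = 2 := Real.mul_self_sqrt (by norm_num)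
    convert this using 2
    · simp only [fB]
      linear_combination (d * Real.exp (-(s/8)) * Real.cos (Real.sqrt 2 * s)) * hs2
    · simp only [fB]
      ring

lemma LQ_pos : 0 < LQ := mul_pos sqrt2_pos (Real.exp_pos _)

lemma one_lt_LQ_sq : 1 < LQ ^ 2 := by
  have hs2 : Real.sqrt 2 * Real.sqrt 2 = 2 := Real.mul_self_sqrt (by norm_num)
  have hk : kQ * kQ = Real.exp (-(tQ / 4)) := by
    rw [kQ, ← Real.exp_add]; congr 1; ring
  have hLQ : LQ ^ 2 = 2 * Real.exp (-(tQ / 4)) := by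
    rw [pow_two, LQ]
    calc Real.sqrt 2 * kQ * (Real.sqrt 2 * kQ) = Real.sqrt 2 * Real.sqrt 2 * (kQ * kQ) := by ring
    _ = 2 * Real.exp (-(tQ / 4)) := by rw [hs2, hk]
  rw [hLQ]
  have hbound : tQ / 4 < Real.log 2 := by
    have hπ : π < 3.15 := Real.pi_lt_d2
    have hs : Real.sqrt 2 > 1.4 := by
      have : (1.4 : ℝ) = Real.sqrt (1.4 ^ 2) := by
        rw [Real.sqrt_sq]; norm_num
      rw [this]
      exact Real.sqrt_lt_sqrt (by norm_num) (by norm_num)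
    have ht : tQ < 3.15 / (2 * 1.4) := by
      apply div_lt_div₀ hπ (by nlinarith) (by norm_num) (by norm_num)
    have hlog : (0.6931471803 : ℝ) < Real.log 2 := Real.log_two_gt_d9
    nlinarith
  have hE2 : Real.exp (tQ / 4) < 2 := by
    calc Real.exp (tQ / 4) < Real.exp (Real.log 2) := Real.exp_lt_exp.2 hbound
    _ = 2 := Real.exp_log (by norm_num)
  have hpos := Real.exp_pos (tQ / 4)
  rw [Real.exp_neg, ← div_eq_mul_inv, lt_div_iff₀ hpos, one_mul]
  exact hE2

/-- One double-step: (c,0) reaches (−L²·c, 0). -/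
lemma doubleStep (c : ℝ) :
    Relation.ReflTransGen (fun a b => FlowRel fA a b ∨ FlowRel fB a b)
      (c, 0) (-(LQ ^ 2 * c), 0) := by
  have h1 : FlowRel fA (c, 0) (0, LQ * c) := flowA c
  have h2 : FlowRel fB (0, LQ * c) (-(LQ ^ 2 * c), 0) := by
    have := flowB (LQ * c)
    convert this using 2
    ring
  exact Relation.ReflTransGen.tail (Relation.ReflTransGen.single (Or.inl h1)) (Or.inr h2)

lemma nSteps (c : ℝ) (n : ℕ) :
    Relation.ReflTransGen (fun a b => FlowRel fA a b ∨ FlowRel fB a b)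
      (c, 0) ((-(LQ ^ 2)) ^ n * c, 0) := by
  induction n with
  | zero => simpa using Relation.ReflTransGen.refl
  | succ n ih =>
      have := doubleStep ((-(LQ ^ 2)) ^ n * c)
      have heq : (-(LQ ^ 2 * ((-(LQ ^ 2)) ^ n * c)), (0:ℝ)) = ((-(LQ ^ 2)) ^ (n+1) * c, 0) := by
        rw [pow_succ]
        ring_nf
      rw [heq] at this
      exact ih.trans this

lemma enorm2_x (x : ℝ) : enorm2 (x, 0) = |x| := by
  simp [enorm2, Real.sqrt_sq_eq_abs]

end Aux

theorem origin_not_stable_arbitrary_switching :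
    ∃ ε : ℝ, 0 < ε ∧
      ∀ δ : ℝ, 0 < δ →
        ∃ ω : ℝ × ℝ, enorm2 ω < δ ∧
          ∃ ν : ℝ × ℝ,
            Relation.ReflTransGen (fun a b => FlowRel fA a b ∨ FlowRel fB a b) ω ν ∧
            ε ≤ enorm2 ν := by
  refine ⟨1, one_pos, fun δ hδ => ?_⟩
  set c : ℝ := δ / 2 with hc
  have hcpos : 0 < c := by positivity
  obtain ⟨n, hn⟩ := pow_unbounded_of_one_lt (1 / c) one_lt_LQ_sq
  refine ⟨(c, 0), ?_, ((-(LQ ^ 2)) ^ n * c, 0), nSteps c n, ?_⟩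
  · rw [enorm2_x, abs_of_pos hcpos]
    linarith
  · rw [enorm2_x, abs_mul, abs_pow, abs_neg, abs_of_pos (pow_pos LQ_pos 2),
      abs_of_pos hcpos]
    rw [div_lt_iff₀ hcpos] at hn
    nlinarith [pow_pos (pow_pos LQ_pos 2) n]
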